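/- Let G be an edge-coloured graph that is edge-minimal subject to preserving all colour degrees, i.e. deleting any edge decreases d^c(v) for some vertex v. Then every monochromatic subgraph of G (the subgraph formed by all edges of a fixed colour) is a vertex-disjoint union of stars. -/

import Mathlib

open SimpleGraph

/-- A list of vertices forms a properly coloured walk: consecutive vertices are
adjacent and consecutive edges receive different colours. -/
def IsPCWalk {V : Type*} (G : SimpleGraph V) (c : V → V → ℕ) : List V → Prop
  | a :: b :: d :: rest => G.Adj a b ∧ c a b ≠ c b d ∧ IsPCWalk G c (b :: d :: rest)
  | [a, b] => G.Adj a b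
  | _ => True

/-- A properly coloured path: distinct vertices forming a properly coloured walk. -/
def IsPCPath {V : Type*} (G : SimpleGraph V) (c : V → V → ℕ) (l : List V) : Prop :=
  l.Nodup ∧ IsPCWalk G c l

/-- A properly coloured cycle, given as a list of (distinct) vertices of length ≥ 3;
closing the cycle by appending the first two vertices ensures all adjacencies and
colour conditions, including around the wrap-around vertex. -/
def IsPCCycle {V : Type*} (G : SimpleGraph V) (c : V → V → ℕ) (l : List V) : Prop :=
  3 ≤ l.length ∧ l.Nodup ∧ IsPCWalk G c (l ++ l.take 2)

/-- The colour degree of `v`: the number of distinct colours on edges at `v`. -/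
noncomputable def colourDeg {V : Type*} (G : SimpleGraph V) (c : V → V → ℕ) (v : V) : ℕ :=
  ((c v) '' {w | G.Adj v w}).ncard

/-- `colourDeg1 G c v a`: the number of edges at `v` whose colour differs from `a`.
`δ₁^c(G) ≥ k` is then `∀ v a, k ≤ colourDeg1 G c v a`. -/
noncomputable def colourDeg1 {V : Type*} (G : SimpleGraph V) (c : V → V → ℕ) (v : V) (a : ℕ) : ℕ :=
  {w | G.Adj v w ∧ c v w ≠ a}.ncard

/-- If `G` is edge-minimal subject to preserving all colour degrees (deleting
any edge strictly decreases the colour degree of some vertex), then every monochromatic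
subgraph of `G` is a vertex-disjoint union of stars: for every edge `uv` of colour `a`, one of
its endpoints has only one incident edge of colour `a`. -/
theorem stmt12 {V : Type*} [Fintype V] [DecidableEq V] (G : SimpleGraph V) (c : V → V → ℕ)
    (hc : ∀ u v, c u v = c v u)
    (hmin : ∀ u v : V, G.Adj u v →
      ∃ w : V, colourDeg (G.deleteEdges {s(u, v)}) c w < colourDeg G c w) :
    ∀ (a : ℕ) (u v : V), G.Adj u v → c u v = a →
      ({w | G.Adj u w ∧ c u w = a} : Set V).ncard ≤ 1 ∨
      ({w | G.Adj v w ∧ c v w = a} : Set V).ncard ≤ 1 := by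
  intro a u v huv hcuv
  by_contra hcon
  push_neg at hcon
  obtain ⟨h1, h2⟩ := hcon
  -- witnesses
  have hne : u ≠ v := G.ne_of_adj huv
  have hw1 : ∃ w, G.Adj u w ∧ c u w = a ∧ w ≠ v := by
    obtain ⟨x, y, hx, hy, hxy⟩ :=
      (Set.one_lt_ncard_iff (Set.toFinite _)).mp h1
    rcases eq_or_ne x v with rfl | hxv
    · exact ⟨y, hy.1, hy.2, fun h => hxy h.symm⟩
    · exact ⟨x, hx.1, hx.2, hxv⟩
  have hw2 : ∃ w, G.Adj v w ∧ c v w = a ∧ w ≠ u := by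
    obtain ⟨x, y, hx, hy, hxy⟩ :=
      (Set.one_lt_ncard_iff (Set.toFinite _)).mp h2
    rcases eq_or_ne x u with rfl | hxu
    · exact ⟨y, hy.1, hy.2, fun h => hxy h.symm⟩
    · exact ⟨x, hx.1, hx.2, hxu⟩
  obtain ⟨w1, hadj1, hcw1, hw1v⟩ := hw1
  obtain ⟨w2, hadj2, hcw2, hw2u⟩ := hw2
  have key : ∀ w, colourDeg (G.deleteEdges {s(u, v)}) c w = colourDeg G c w := by
    intro w
    unfold colourDeg
    congr 1
    apply Set.Subset.antisymm
    · exact Set.image_mono (fun x hx => (SimpleGraph.deleteEdges_adj.mp hx).1)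
    · rintro b ⟨x, hx, rfl⟩
      simp only [Set.mem_setOf_eq] at hx
      by_cases hmem : s(w, x) = s(u, v)
      · rw [Sym2.eq_iff] at hmem
        rcases hmem with ⟨hwu, hxv⟩ | ⟨hwv, hxu⟩
        · subst hwu; subst hxv
          refine ⟨w1, ?_, ?_⟩
          · refine SimpleGraph.deleteEdges_adj.mpr ⟨hadj1, ?_⟩
            simp only [Set.mem_singleton_iff, Sym2.eq_iff]
            push_neg
            exact ⟨fun _ => hw1v, fun h => absurd h hne⟩
          · rw [hcw1, hcuv]
        · subst hwv; subst hxu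
          refine ⟨w2, ?_, ?_⟩
          · refine SimpleGraph.deleteEdges_adj.mpr ⟨hadj2, ?_⟩
            simp only [Set.mem_singleton_iff, Sym2.eq_iff]
            push_neg
            exact ⟨fun h => absurd h hne.symm, fun _ => hw2u⟩
          · rw [hcw2, hc w x, hcuv]
      · exact ⟨x, SimpleGraph.deleteEdges_adj.mpr ⟨hx, by simpa using hmem⟩, rfl⟩
  obtain ⟨w, hw⟩ := hmin u v huv
  rw [key w] at hw
  exact lt_irrefl _ hw
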